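/- Let s be an odd prime power, F = GF(s), t = (s-1)/2, F⁺ = F ∪ {∞}. In the plan P* = P₀ ⊕ F of Theorem 3.4 (blocks of size t+1 obtained by developing the two initial blocks B₀ and B₁ (t even) or B₀ and B₂ (t odd) over F), the two-factor incidence matrix N₁₂ (indexed by F⁺) equals J − I, the all-ones matrix minus the identity of order s+1. -/

import Mathlib

open scoped Classical

/-- The set of nonzero squares of a finite field. -/
noncomputable def C0F (F : Type*) [Field F] [Fintype F] : Finset F :=
  Finset.univ.filter (fun x => x ≠ 0 ∧ IsSquare x)

/-- Development of a run over `F⁺ = F ∪ {∞}` (with `∞ = none`): add `u` to each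
finite coordinate, `∞ + u = ∞`. -/
def devRun {F : Type*} [Field F] (u : F) (p : Option F × Option F) :
    Option F × Option F :=
  (p.1.map (· + u), p.2.map (· + u))

/-- The initial block `B₀`: columns of `R⁰`, i.e. `(∞, 0)` and `(y, δy)` for `y ∈ C₀`. -/
noncomputable def blk0 (F : Type*) [Field F] [Fintype F] (δ : F) :
    Multiset (Option F × Option F) :=
  ((none, some 0) : Option F × Option F) ::ₘ
    (C0F F).val.map (fun y => (some y, some (δ * y)))

/-- The initial block `B₁`: columns of `R¹`, i.e. `(0, ∞)` and `(y, δ⁻¹y)` for `y ∈ C₀`. -/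
noncomputable def blk1 (F : Type*) [Field F] [Fintype F] (δ : F) :
    Multiset (Option F × Option F) :=
  ((some 0, none) : Option F × Option F) ::ₘ
    (C0F F).val.map (fun y => (some y, some (δ⁻¹ * y)))

/-- The initial block `B₂`: columns of `R²`, i.e. `(0, ∞)` and `(δ⁻¹y, y)` for `y ∈ C₀`. -/
noncomputable def blk2 (F : Type*) [Field F] [Fintype F] (δ : F) :
    Multiset (Option F × Option F) :=
  ((some 0, none) : Option F × Option F) ::ₘ
    (C0F F).val.map (fun y => (some (δ⁻¹ * y), some y))

/-- All runs of the plan `P* = P₀ ⊕ F` of Theorem 3.4: the pair of initial blocks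
(`B₀, B₁` if `t` even; `B₀, B₂` if `t` odd) developed over `F`. -/
noncomputable def totalRuns (F : Type*) [Field F] [Fintype F] (δ : F) (t : ℕ) :
    Multiset (Option F × Option F) :=
  Finset.univ.val.bind (fun u : F =>
    (blk0 F δ).map (devRun u)
      + ((if Even t then blk1 F δ else blk2 F δ)).map (devRun u))

section Helpers

variable {F : Type*} [Field F] [Fintype F]

lemma devRun_inj (u : F) : Function.Injective (devRun (F := F) u) := by
  intro a b h
  have h1 := congrArg Prod.fst h
  have h2 := congrArg Prod.snd h
  simp only [devRun] at h1 h2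
  exact Prod.ext (Option.map_injective (add_left_injective u) h1)
    (Option.map_injective (add_left_injective u) h2)

lemma devRun_devRun (u v : F) (z : Option F × Option F) :
    devRun u (devRun v z) = devRun (v + u) z := by
  simp only [devRun, Option.map_map]
  have : ((fun x => x + u) ∘ fun x => x + v) = (fun x : F => x + (v + u)) := by
    funext x; simp [add_assoc]
  rw [this]

lemma count_map_devRun (u : F) (m : Multiset (Option F × Option F))
    (z : Option F × Option F) :
    (m.map (devRun u)).count z = m.count (devRun (-u) z) := by
  conv_lhs => rw [show z = devRun u (devRun (-u) z) by rw [devRun_devRun]; simp [devRun]]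
  exact Multiset.count_map_eq_count' _ _ (devRun_inj u) _

lemma count_mapA (g : F → F) (x₁ x₂ : F) :
    ((C0F F).val.map (fun y => ((some y : Option F), (some (g y) : Option F)))).count
      (some x₁, some x₂) = if x₁ ∈ C0F F ∧ x₂ = g x₁ then 1 else 0 := by
  split
  · next h =>
    obtain ⟨h1, h2⟩ := h
    subst h2
    have hinj : Function.Injective (fun y : F => ((some y : Option F), (some (g y) : Option F))) :=
      fun a b hab => Option.some_injective F (congrArg Prod.fst hab)
    rw [show ((some x₁, some (g x₁)) : Option F × Option F)
        = (fun y : F => ((some y : Option F), (some (g y) : Option F))) x₁ from rfl,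
      Multiset.count_map_eq_count' _ _ hinj]
    exact Multiset.count_eq_one_of_mem (C0F F).nodup h1
  · next h =>
    rw [Multiset.count_eq_zero]
    intro hmem
    obtain ⟨y, hy, heq⟩ := Multiset.mem_map.mp hmem
    simp only [Prod.mk.injEq, Option.some.injEq] at heq
    exact h ⟨heq.1 ▸ hy, heq.1 ▸ heq.2.symm⟩

lemma count_mapB (g : F → F) (x₁ x₂ : F) :
    ((C0F F).val.map (fun y => ((some (g y) : Option F), (some y : Option F)))).count
      (some x₁, some x₂) = if x₂ ∈ C0F F ∧ x₁ = g x₂ then 1 else 0 := by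
  split
  · next h =>
    obtain ⟨h1, h2⟩ := h
    subst h2
    have hinj : Function.Injective (fun y : F => ((some (g y) : Option F), (some y : Option F))) :=
      fun a b hab => Option.some_injective F (congrArg Prod.snd hab)
    rw [show ((some (g x₂), some x₂) : Option F × Option F)
        = (fun y : F => ((some (g y) : Option F), (some y : Option F))) x₂ from rfl,
      Multiset.count_map_eq_count' _ _ hinj]
    exact Multiset.count_eq_one_of_mem (C0F F).nodup h1
  · next h =>
    rw [Multiset.count_eq_zero]
    intro hmem
    obtain ⟨y, hy, heq⟩ := Multiset.mem_map.mp hmem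
    simp only [Prod.mk.injEq, Option.some.injEq] at heq
    exact h ⟨heq.2 ▸ hy, heq.2 ▸ heq.1.symm⟩

lemma count_blk0_nf (δ : F) (x : Option F) :
    (blk0 F δ).count (none, x) = if x = some 0 then 1 else 0 := by
  rw [blk0, Multiset.count_cons]
  have : ((C0F F).val.map (fun y => ((some y : Option F), (some (δ * y) : Option F)))).count
      (none, x) = 0 := by
    rw [Multiset.count_eq_zero]
    intro hmem
    obtain ⟨y, _, heq⟩ := Multiset.mem_map.mp hmem
    exact Option.some_ne_none y (congrArg Prod.fst heq)
  rw [this]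
  simp [Prod.ext_iff]

lemma count_blk0_sn (δ : F) (a : F) : (blk0 F δ).count (some a, none) = 0 := by
  rw [blk0, Multiset.count_cons, Multiset.count_eq_zero.mpr, if_neg (by simp)]
  intro hmem
  obtain ⟨y, _, heq⟩ := Multiset.mem_map.mp hmem
  exact Option.some_ne_none (δ * y) (congrArg Prod.snd heq)

lemma count_blk0_ss (δ : F) (a b : F) :
    (blk0 F δ).count (some a, some b) = if a ∈ C0F F ∧ b = δ * a then 1 else 0 := by
  rw [blk0, Multiset.count_cons, if_neg (by simp), count_mapA, add_zero]

lemma count_blk1_nf (δ : F) (x : Option F) : (blk1 F δ).count (none, x) = 0 := by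
  rw [blk1, Multiset.count_cons, Multiset.count_eq_zero.mpr, if_neg (by simp [Prod.ext_iff])]
  intro hmem
  obtain ⟨y, _, heq⟩ := Multiset.mem_map.mp hmem
  exact Option.some_ne_none y (congrArg Prod.fst heq)

lemma count_blk2_nf (δ : F) (x : Option F) : (blk2 F δ).count (none, x) = 0 := by
  rw [blk2, Multiset.count_cons, Multiset.count_eq_zero.mpr, if_neg (by simp [Prod.ext_iff])]
  intro hmem
  obtain ⟨y, _, heq⟩ := Multiset.mem_map.mp hmem
  exact Option.some_ne_none (δ⁻¹ * y) (congrArg Prod.fst heq)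

lemma count_blk1_sn (δ : F) (a : F) :
    (blk1 F δ).count (some a, none) = if a = 0 then 1 else 0 := by
  rw [blk1, Multiset.count_cons, Multiset.count_eq_zero.mpr, zero_add]
  · simp [Prod.ext_iff]
  intro hmem
  obtain ⟨y, _, heq⟩ := Multiset.mem_map.mp hmem
  exact Option.some_ne_none (δ⁻¹ * y) (congrArg Prod.snd heq)

lemma count_blk2_sn (δ : F) (a : F) :
    (blk2 F δ).count (some a, none) = if a = 0 then 1 else 0 := by
  rw [blk2, Multiset.count_cons, Multiset.count_eq_zero.mpr, zero_add]
  · simp [Prod.ext_iff]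
  intro hmem
  obtain ⟨y, _, heq⟩ := Multiset.mem_map.mp hmem
  exact Option.some_ne_none y (congrArg Prod.snd heq)

lemma count_blk1_ss (δ : F) (a b : F) :
    (blk1 F δ).count (some a, some b) = if a ∈ C0F F ∧ b = δ⁻¹ * a then 1 else 0 := by
  rw [blk1, Multiset.count_cons, if_neg (by simp), count_mapA, add_zero]

lemma count_blk2_ss (δ : F) (a b : F) :
    (blk2 F δ).count (some a, some b) = if b ∈ C0F F ∧ a = δ⁻¹ * b then 1 else 0 := by
  rw [blk2, Multiset.count_cons, if_neg (by simp), count_mapB, add_zero]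

omit [Field F] [Fintype F] in
lemma sum_ite_and [Fintype F] [DecidableEq F] (u₀ : F) (Q : Prop) [Decidable Q] :
    (∑ u : F, if (u = u₀ ∧ Q) then (1:ℕ) else 0) = if Q then 1 else 0 := by
  have h : ∀ u : F, (if (u = u₀ ∧ Q) then (1:ℕ) else 0)
      = if u = u₀ then (if Q then 1 else 0) else 0 := by
    intro u; by_cases h1 : u = u₀ <;> by_cases h2 : Q <;> simp [h1, h2]
  simp only [h, Finset.sum_ite_eq' Finset.univ u₀, Finset.mem_univ, if_true]

lemma quad_flip {ε c : F} (hε0 : ε ≠ 0) (hεns : ¬ IsSquare ε) (hc : c ≠ 0) :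
    IsSquare (ε * c) ↔ ¬ IsSquare c := by
  rw [← quadraticChar_one_iff_isSquare (mul_ne_zero hε0 hc), map_mul,
    quadraticChar_neg_one_iff_not_isSquare.mpr hεns, ← quadraticChar_neg_one_iff_not_isSquare,
    neg_one_mul, neg_eq_iff_eq_neg]

lemma count_totalRuns (δ : F) (t : ℕ) (z : Option F × Option F) :
    (totalRuns F δ t).count z
      = ∑ u : F, ((blk0 F δ).count (devRun (-u) z)
        + (if Even t then blk1 F δ else blk2 F δ).count (devRun (-u) z)) := by
  rw [totalRuns, Multiset.count_bind]
  simp only [Multiset.count_add, count_map_devRun]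
  rfl

end Helpers

/-- in the plan `P*` of Theorem 3.4 (with `δ` a nonzero non-square and
`t = (s-1)/2`), the two-factor incidence matrix `N₁₂`, indexed by `F⁺`, equals `J − I`. -/
theorem stmt10 (F : Type*) [Field F] [Fintype F] (s t : ℕ)
    (hs : Fintype.card F = s) (hodd : Odd s) (ht : t = (s - 1) / 2)
    (δ : F) (hδ0 : δ ≠ 0) (hδ : ¬ IsSquare δ)
    (p q : Option F) :
    (totalRuns F δ t).count (p, q) = if p = q then 0 else 1 := by
  have hδ1 : δ - 1 ≠ 0 := sub_ne_zero.mpr fun h => hδ (h ▸ IsSquare.one)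
  have hδ1' : (1 : F) - δ ≠ 0 := fun h => hδ1 (by linear_combination -h)
  rw [count_totalRuns]
  rcases p with _ | a <;> rcases q with _ | b
  · -- (none, none)
    by_cases hev : Even t <;>
      simp [hev, devRun, count_blk0_nf, count_blk1_nf, count_blk2_nf]
  · -- (none, some b)
    have hdev : ∀ u : F, devRun (-u) ((none : Option F), some b) = (none, some (b + -u)) := by
      intro u; simp [devRun]
    have h2 : ∀ u : F, (b + -u = 0) ↔ (u = b) := by
      intro u; rw [add_neg_eq_zero]; exact eq_comm
    by_cases hev : Even t <;>
      · simp only [hev, if_true, if_false, ite_true, ite_false, hdev, count_blk0_nf,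
          count_blk1_nf, count_blk2_nf, Option.some.injEq, h2, add_zero]
        rw [Finset.sum_ite_eq' Finset.univ b (fun _ => 1)]
        simp
  · -- (some a, none)
    have hdev : ∀ u : F, devRun (-u) (some a, (none : Option F)) = (some (a + -u), none) := by
      intro u; simp [devRun]
    have h2 : ∀ u : F, (a + -u = 0) ↔ (u = a) := by
      intro u; rw [add_neg_eq_zero]; exact eq_comm
    by_cases hev : Even t <;>
      · simp only [hev, if_true, if_false, ite_true, ite_false, hdev, count_blk0_sn,
          count_blk1_sn, count_blk2_sn, h2, zero_add]
        rw [Finset.sum_ite_eq' Finset.univ a (fun _ => 1)]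
        simp
  · -- (some a, some b)
    have hdev : ∀ u : F, devRun (-u) (some a, some b) = (some (a + -u), some (b + -u)) := by
      intro u; simp [devRun]
    set c : F := (b - a) / (δ - 1) with hc_def
    have key0 : ∀ u : F, ((a + -u ∈ C0F F ∧ b + -u = δ * (a + -u))
        ↔ (u = (δ * a - b) / (δ - 1) ∧ c ∈ C0F F)) := by
      intro u
      have e1 : (b + -u = δ * (a + -u)) ↔ u = (δ * a - b) / (δ - 1) := by
        rw [eq_div_iff hδ1]
        constructor <;> intro h <;> linear_combination h
      have e2 : a + -((δ * a - b) / (δ - 1)) = c := by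
        rw [hc_def]; field_simp; ring
      constructor
      · rintro ⟨h1, h2⟩
        have hu := e1.mp h2
        rw [hu, e2] at h1
        exact ⟨hu, h1⟩
      · rintro ⟨hu, hc⟩
        subst hu
        exact ⟨by rw [e2]; exact hc, e1.mpr rfl⟩
    have key1 : ∀ u : F, ((a + -u ∈ C0F F ∧ b + -u = δ⁻¹ * (a + -u))
        ↔ (u = (a - δ * b) / (1 - δ) ∧ -(δ * c) ∈ C0F F)) := by
      intro u
      have e1 : (b + -u = δ⁻¹ * (a + -u)) ↔ u = (a - δ * b) / (1 - δ) := by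
        rw [eq_div_iff hδ1', inv_mul_eq_div, eq_div_iff hδ0]
        constructor <;> intro h <;> linear_combination h
      have e2 : a + -((a - δ * b) / (1 - δ)) = -(δ * c) := by
        rw [hc_def]; field_simp; ring
      constructor
      · rintro ⟨h1, h2⟩
        have hu := e1.mp h2
        rw [hu, e2] at h1
        exact ⟨hu, h1⟩
      · rintro ⟨hu, hc⟩
        subst hu
        exact ⟨by rw [e2]; exact hc, e1.mpr rfl⟩
    have key2 : ∀ u : F, ((b + -u ∈ C0F F ∧ a + -u = δ⁻¹ * (b + -u))
        ↔ (u = (b - δ * a) / (1 - δ) ∧ δ * c ∈ C0F F)) := by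
      intro u
      have e1 : (a + -u = δ⁻¹ * (b + -u)) ↔ u = (b - δ * a) / (1 - δ) := by
        rw [eq_div_iff hδ1', inv_mul_eq_div, eq_div_iff hδ0]
        constructor <;> intro h <;> linear_combination h
      have e2 : b + -((b - δ * a) / (1 - δ)) = δ * c := by
        rw [hc_def]; field_simp; ring
      constructor
      · rintro ⟨h1, h2⟩
        have hu := e1.mp h2
        rw [hu, e2] at h1
        exact ⟨hu, h1⟩
      · rintro ⟨hu, hc⟩
        subst hu
        exact ⟨by rw [e2]; exact hc, e1.mpr rfl⟩
    have hmem : ∀ x : F, x ∈ C0F F ↔ (x ≠ 0 ∧ IsSquare x) := fun x => by simp [C0F]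
    by_cases hab : a = b
    · subst hab
      have hc0 : c = 0 := by rw [hc_def, sub_self, zero_div]
      have hF0 : ¬ (c ∈ C0F F) := by rw [hmem]; simp [hc0]
      have hF1 : ¬ (-(δ * c) ∈ C0F F) := by rw [hmem]; simp [hc0]
      have hF2 : ¬ (δ * c ∈ C0F F) := by rw [hmem]; simp [hc0]
      by_cases hev : Even t <;>
        simp only [hev, if_true, if_false, ite_true, ite_false, hdev, count_blk0_ss,
          count_blk1_ss, count_blk2_ss, key0, key1, key2, hF0, hF1, hF2, and_false] <;>
        simp
    · have hc0 : c ≠ 0 := div_ne_zero (sub_ne_zero.mpr fun h => hab h.symm) hδ1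
      have h₁ : (c ∈ C0F F) ↔ IsSquare c := by rw [hmem]; simp [hc0]
      by_cases hev : Even t
      · have hcard : Fintype.card F % 4 ≠ 3 := by
          obtain ⟨m, hm⟩ := hodd
          obtain ⟨n, hn⟩ := hev
          rw [hs]
          omega
        have hm1 : IsSquare (-1 : F) := FiniteField.isSquare_neg_one_iff.mpr hcard
        have hnδ : ¬ IsSquare (-δ) := fun h => hδ (by simpa using hm1.mul h)
        have h₂ : (-(δ * c) ∈ C0F F) ↔ ¬ IsSquare c := by
          rw [show -(δ * c) = (-δ) * c by ring, hmem,
            quad_flip (neg_ne_zero.mpr hδ0) hnδ hc0]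
          simp [hδ0, hc0]
        simp only [hev, if_true, ite_true, hdev, count_blk0_ss, count_blk1_ss, key0, key1]
        rw [Finset.sum_add_distrib, sum_ite_and, sum_ite_and]
        simp only [h₁, h₂]
        by_cases hsq : IsSquare c <;> simp [hsq, hab]
      · have h₂ : (δ * c ∈ C0F F) ↔ ¬ IsSquare c := by
          rw [hmem, quad_flip hδ0 hδ hc0]
          simp [hδ0, hc0]
        simp only [hev, if_false, ite_false, hdev, count_blk0_ss, count_blk2_ss, key0, key2]
        rw [Finset.sum_add_distrib, sum_ite_and, sum_ite_and]
        simp only [h₁, h₂]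
        by_cases hsq : IsSquare c <;> simp [hsq, hab]
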